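/- Let A be a positive type D matrix (a_{ij} = α_{min(i,j)} with 0 < α₁ < ⋯ < α_n). Then A is nonsingular and its inverse A⁻¹ is a Z-matrix (all off-diagonal entries of A⁻¹ are nonpositive). -/

import Mathlib

open Matrix

/-- A Z-matrix: all off-diagonal entries are nonpositive. -/
def IsZMatrix {ι : Type*} [Fintype ι] [DecidableEq ι] (A : Matrix ι ι ℝ) : Prop :=
  ∀ i j, i ≠ j → A i j ≤ 0

/-- A hidden Z-matrix: AX = Y for Z-matrices X, Y, with rᵀX + sᵀY > 0 for some r, s ≥ 0. -/
def IsHiddenZ {ι : Type*} [Fintype ι] [DecidableEq ι] (A : Matrix ι ι ℝ) : Prop :=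
  ∃ X Y : Matrix ι ι ℝ, ∃ r s : ι → ℝ,
    IsZMatrix X ∧ IsZMatrix Y ∧ A * X = Y ∧
    (∀ i, 0 ≤ r i) ∧ (∀ i, 0 ≤ s i) ∧
    (∀ j, 0 < (Matrix.vecMul r X + Matrix.vecMul s Y) j)

/-- The principal minor of `A` indexed by `α`. -/
def principalMinor {ι : Type*} [Fintype ι] [DecidableEq ι] (A : Matrix ι ι ℝ)
    (α : Finset ι) : ℝ :=
  (A.submatrix (fun i : {x // x ∈ α} => (i : ι)) (fun j : {x // x ∈ α} => (j : ι))).det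

open Finset in
lemma typeD_right_inv {n : ℕ} (α : Fin n → ℝ) (hpos : ∀ i, 0 < α i)
    (hmono : StrictMono α) (A : Matrix (Fin n) (Fin n) ℝ)
    (hA : ∀ i j, A i j = α (min i j)) :
    ∃ B : Matrix (Fin n) (Fin n) ℝ, A * B = 1 ∧ ∀ i j : Fin n, i ≠ j → B i j ≤ 0 := by
  classical
  set a : ℕ → ℝ := fun m => if h : m < n then α ⟨m, h⟩ else 0 with ha_def
  set b : ℕ → ℝ := fun m => if m = 0 then a 0 else a m - a (m - 1) with hb_def
  have ha_val : ∀ (m : ℕ) (h : m < n), a m = α ⟨m, h⟩ := by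
    intro m h; simp only [ha_def, dif_pos h]
  have ha_pos : ∀ m, m < n → 0 < a m := by
    intro m h; rw [ha_val m h]; exact hpos _
  have ha_lt : ∀ p q : ℕ, p < q → q < n → a p < a q := by
    intro p q hpq hq
    rw [ha_val p (hpq.trans hq), ha_val q hq]
    exact hmono (by simpa [Fin.lt_def] using hpq)
  have hb_pos : ∀ m, m < n → 0 < b m := by
    intro m h
    rcases Nat.eq_zero_or_pos m with h0 | h0
    · simp only [hb_def, h0, if_pos rfl]; exact ha_pos 0 (h0 ▸ h)
    · have hm : m ≠ 0 := h0.ne'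
      simp only [hb_def, if_neg hm]
      have := ha_lt (m - 1) m (by omega) h
      linarith
  set Bv : ℕ → ℕ → ℝ := fun k j =>
    (if k = j then (1 / b j + if j + 1 < n then 1 / b (j + 1) else 0) else 0)
    + (if k = j + 1 then -(1 / b (j + 1)) else 0)
    + (if k + 1 = j then -(1 / b j) else 0) with hBv_def
  refine ⟨Matrix.of fun k j => Bv ↑k ↑j, ?_, ?_⟩
  · ext i j
    have hmul : (A * Matrix.of (fun k j => Bv ↑k ↑j : Fin n → Fin n → ℝ)) i j
        = ∑ m ∈ range n, a (min ↑i m) * Bv m ↑j := by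
      rw [Matrix.mul_apply, ← Fin.sum_univ_eq_sum_range (fun m => a (min ↑i m) * Bv m ↑j)]
      refine Finset.sum_congr rfl fun k _ => ?_
      congr 1
      rw [hA]
      have hcoe : ((min i k : Fin n) : ℕ) = min (↑i) (↑k) := rfl
      rw [← hcoe, ha_val _ (min i k).isLt]
    rw [hmul]
    have hsplit : ∑ m ∈ range n, a (min ↑i m) * Bv m ↑j
        = (∑ m ∈ range n, if m = (j : ℕ) then a (min ↑i ↑j) * (1 / b ↑j + if (j:ℕ) + 1 < n then 1 / b (↑j + 1) else 0) else 0)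
        + (∑ m ∈ range n, if m = (j : ℕ) + 1 then a (min ↑i (↑j + 1)) * (-(1 / b (↑j + 1))) else 0)
        + (∑ m ∈ range n, if m + 1 = (j : ℕ) then a (min ↑i (↑j - 1)) * (-(1 / b ↑j)) else 0) := by
      rw [← Finset.sum_add_distrib, ← Finset.sum_add_distrib]
      refine Finset.sum_congr rfl fun m _ => ?_
      simp only [hBv_def, mul_add, mul_ite, mul_zero]
      congr 1
      · congr 1
        · by_cases h1 : m = (j:ℕ)
          · subst h1; rfl
          · rw [if_neg h1, if_neg h1]
        · by_cases h1 : m = (j:ℕ) + 1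
          · subst h1; rfl
          · rw [if_neg h1, if_neg h1]
      · by_cases h1 : m + 1 = (j:ℕ)
        · rw [if_pos h1, if_pos h1, show (j:ℕ) - 1 = m by omega]
        · rw [if_neg h1, if_neg h1]
    rw [hsplit]
    have h3 : (∑ m ∈ range n, if m + 1 = (j : ℕ) then a (min ↑i (↑j - 1)) * (-(1 / b ↑j)) else 0)
        = if (j:ℕ) = 0 then 0 else a (min ↑i (↑j - 1)) * (-(1 / b ↑j)) := by
      by_cases hj : (j:ℕ) = 0
      · rw [if_pos hj]
        exact Finset.sum_eq_zero fun m _ => by rw [if_neg (by omega)]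
      · rw [if_neg hj]
        have : (∑ m ∈ range n, if m + 1 = (j : ℕ) then a (min ↑i (↑j - 1)) * (-(1 / b ↑j)) else 0)
            = ∑ m ∈ range n, if m = (j:ℕ) - 1 then a (min ↑i (↑j - 1)) * (-(1 / b ↑j)) else 0 :=
          Finset.sum_congr rfl fun m _ => if_congr (by omega) rfl rfl
        rw [this, Finset.sum_ite_eq' (range n) ((j:ℕ)-1)]
        rw [if_pos (Finset.mem_range.2 (by omega))]
    rw [h3, Finset.sum_ite_eq' (range n) ((j:ℕ)), Finset.sum_ite_eq' (range n) ((j:ℕ)+1)]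
    rw [if_pos (Finset.mem_range.2 j.isLt)]
    rw [Matrix.one_apply]
    have hbj : b ↑j ≠ 0 := (hb_pos _ j.isLt).ne'
    by_cases hc : (j:ℕ) + 1 < n
    · rw [if_pos hc, if_pos (Finset.mem_range.2 hc)]
      have hbj1 : b (↑j + 1) ≠ 0 := (hb_pos _ hc).ne'
      have hbj1e : b (↑j + 1) = a (↑j + 1) - a ↑j := by
        simp only [hb_def, if_neg (Nat.succ_ne_zero _), Nat.add_sub_cancel]
      rcases lt_trichotomy (i:ℕ) (j:ℕ) with h | h | h
      · rw [if_neg (fun he => absurd (congrArg Fin.val he) (by omega))]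
        by_cases hj : (j:ℕ) = 0
        · omega
        · rw [if_neg hj, min_eq_left (by omega), min_eq_left (by omega),
            min_eq_left (by omega)]
          field_simp
          ring
      · rw [if_pos (Fin.ext h)]
        by_cases hj : (j:ℕ) = 0
        · rw [if_pos hj, h, min_self, min_eq_left (by omega)]
          have hb0 : b ↑j = a ↑j := by rw [hj]; simp [hb_def]
          rw [hb0]
          have : a (↑j:ℕ) ≠ 0 := (ha_pos _ j.isLt).ne'
          field_simp
          ring
        · rw [if_neg hj, h, min_self, min_eq_left (by omega), min_eq_right (by omega)]
          have hbje : b ↑j = a ↑j - a (↑j - 1) := by simp only [hb_def, if_neg hj]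
          rw [hbje] at hbj ⊢
          field_simp
          ring
      · rw [if_neg (fun he => absurd (congrArg Fin.val he) (by omega))]
        by_cases hj : (j:ℕ) = 0
        · rw [if_pos hj, min_eq_right (by omega), min_eq_right (by omega)]
          have hb0 : b ↑j = a ↑j := by rw [hj]; simp [hb_def]
          rw [hb0] at hbj
          rw [hbj1e] at hbj1
          rw [hbj1e, hb0]
          field_simp
          ring
        · rw [if_neg hj, min_eq_right (by omega), min_eq_right (by omega),
            min_eq_right (by omega)]
          have hbje : b ↑j = a ↑j - a (↑j - 1) := by simp only [hb_def, if_neg hj]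
          rw [hbje] at hbj
          rw [hbj1e] at hbj1
          rw [hbje, hbj1e]
          field_simp
          ring
    · -- j is the last index: j + 1 = n
      rw [if_neg hc, if_neg (fun hm => hc (Finset.mem_range.1 hm)), add_zero]
      have hjn : (j:ℕ) = n - 1 := by omega
      rcases lt_trichotomy (i:ℕ) (j:ℕ) with h | h | h
      · rw [if_neg (fun he => absurd (congrArg Fin.val he) (by omega))]
        by_cases hj : (j:ℕ) = 0
        · omega
        · rw [if_neg hj, min_eq_left (by omega), min_eq_left (by omega)]
          field_simp
          ring
      · rw [if_pos (Fin.ext h)]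
        by_cases hj : (j:ℕ) = 0
        · rw [if_pos hj, h, min_self]
          have hb0 : b ↑j = a ↑j := by rw [hj]; simp [hb_def]
          rw [hb0]
          have : a (↑j:ℕ) ≠ 0 := (ha_pos _ j.isLt).ne'
          field_simp
          ring
        · rw [if_neg hj, h, min_self, min_eq_right (by omega)]
          have hbje : b ↑j = a ↑j - a (↑j - 1) := by simp only [hb_def, if_neg hj]
          rw [hbje] at hbj ⊢
          field_simp
          ring
      · omega
  · intro i j hne
    have hne' : (i:ℕ) ≠ (j:ℕ) := fun h => hne (Fin.ext h)
    show Bv ↑i ↑j ≤ 0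
    simp only [hBv_def, if_neg hne', zero_add]
    have hbj : 0 < b ↑j := hb_pos _ j.isLt
    split_ifs with h2 h3 h3
    · exfalso; omega
    · have : 0 < b (↑j + 1) := hb_pos _ (h2 ▸ i.isLt)
      rw [add_zero]
      simp only [neg_nonpos]
      positivity
    · rw [zero_add]
      simp only [neg_nonpos]
      positivity
    · simp

theorem typeD_inv_Z {n : ℕ} (α : Fin n → ℝ) (hpos : ∀ i, 0 < α i)
    (hmono : StrictMono α) (A : Matrix (Fin n) (Fin n) ℝ)
    (hA : ∀ i j, A i j = α (min i j)) :
    A.det ≠ 0 ∧ IsZMatrix A⁻¹ := by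
  obtain ⟨B, hAB, hBZ⟩ := typeD_right_inv α hpos hmono A hA
  have hdet : A.det * B.det = 1 := by rw [← Matrix.det_mul, hAB, Matrix.det_one]
  refine ⟨left_ne_zero_of_mul_eq_one hdet, ?_⟩
  rw [Matrix.inv_eq_right_inv hAB]
  exact hBZ
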